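/- Let H ∈ (1/2,1) and T > 0. Then ∫₀^T ∫_s^T (t/s)^{2H−1} (t−s)^{2H−3} dt ds = ∞; that is, the function (t,s) ↦ [∂K_H/∂t (t,s)]² = c(H)²(t/s)^{2H−1}(t−s)^{2H−3} is not integrable over the triangle {0 < s < t < T}. Consequently, by Hitsuda's criterion, the law of the ccmfBm with b ≠ 0 on [0,T] is singular with respect to the law of any multiple of Brownian motion. -/

import Mathlib

open MeasureTheory Real Set Filter

/-- The normalizing constant `c(H)` of the Molchan–Golosov kernel. -/
noncomputable def cH (H : ℝ) : ℝ :=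
  Real.sqrt (2 * H * Real.Gamma (3/2 - H) / (Real.Gamma (H + 1/2) * Real.Gamma (2 - 2*H)))
    * (H - 1/2)

/-- The Molchan–Golosov kernel `K_H(t,s)`; it vanishes for `s ≥ t`. -/
noncomputable def KH (H t s : ℝ) : ℝ :=
  if s < t then
    cH H * s ^ (-(H - 1/2)) * ∫ u in s..t, u ^ (H - 1/2) * (u - s) ^ (H - 3/2)
  else 0

/-- The covariance function of fractional Brownian motion. -/
noncomputable def RH (H t s : ℝ) : ℝ :=
  (t ^ (2*H) + s ^ (2*H) - |t - s| ^ (2*H)) / 2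

/-- The inner integral diverges for every `0 < s < T`. -/
lemma inner_eq_top (H s T : ℝ) (hH : H ∈ Set.Ioo (1/2 : ℝ) 1) (hs : 0 < s) (hsT : s < T) :
    ∫⁻ t in Set.Ioo s T,
      ENNReal.ofReal ((t/s) ^ (2*H - 1) * (t - s) ^ (2*H - 3)) = ⊤ := by
  obtain ⟨hH1, hH2⟩ := hH
  have hTs : (0:ℝ) < T - s := by linarith
  -- First: the simpler integral ∫ (t-s)^(2H-3) diverges.
  have key : ∫⁻ t in Set.Ioo s T, ENNReal.ofReal ((t - s) ^ (2*H - 3)) = ⊤ := by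
    by_contra hne
    have hmeas : Measurable fun t : ℝ => (t - s) ^ (2*H - 3) :=
      (by measurability : Measurable fun t : ℝ => (t - s) ^ (2*H - 3))
    have hnonneg : 0 ≤ᵐ[volume.restrict (Set.Ioo s T)]
        fun t : ℝ => (t - s) ^ (2*H - 3) := by
      filter_upwards [ae_restrict_mem measurableSet_Ioo] with t ht
      exact Real.rpow_nonneg (by linarith [ht.1]) _
    have hfin : HasFiniteIntegral (fun t : ℝ => (t - s) ^ (2*H - 3))
        (volume.restrict (Set.Ioo s T)) := by
      rw [hasFiniteIntegral_iff_ofReal hnonneg]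
      exact lt_top_iff_ne_top.2 hne
    have hint : IntegrableOn (fun t : ℝ => (t - s) ^ (2*H - 3)) (Set.Ioo s T) :=
      ⟨hmeas.aestronglyMeasurable, hfin⟩
    have hii : IntervalIntegrable (fun t : ℝ => (t - s) ^ (2*H - 3)) volume s T := by
      rwa [intervalIntegrable_iff_integrableOn_Ioo_of_le hsT.le]
    have hii2 := hii.comp_add_right s
    have heq : (fun x : ℝ => ((x + s) - s) ^ (2*H - 3)) = fun x : ℝ => x ^ (2*H - 3) := by
      funext x; ring_nf
    rw [heq, sub_self] at hii2
    rw [intervalIntegrable_iff_integrableOn_Ioo_of_le hTs.le] at hii2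
    rw [intervalIntegral.integrableOn_Ioo_rpow_iff hTs] at hii2
    linarith
  -- Now bound below.
  have hle : ∫⁻ t in Set.Ioo s T, ENNReal.ofReal ((t - s) ^ (2*H - 3)) ≤
      ∫⁻ t in Set.Ioo s T,
        ENNReal.ofReal ((t/s) ^ (2*H - 1) * (t - s) ^ (2*H - 3)) := by
    refine setLIntegral_mono
      ((by measurability :
        Measurable fun t : ℝ => (t/s) ^ (2*H - 1) * (t - s) ^ (2*H - 3)).ennreal_ofReal) ?_
    intro t ht
    apply ENNReal.ofReal_le_ofReal
    have h1 : (1:ℝ) ≤ (t/s) ^ (2*H - 1) := by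
      apply Real.one_le_rpow
      · rw [le_div_iff₀ hs]; linarith [ht.1]
      · linarith
    calc (t - s) ^ (2*H - 3) = 1 * (t - s) ^ (2*H - 3) := (one_mul _).symm
      _ ≤ (t/s) ^ (2*H - 1) * (t - s) ^ (2*H - 3) :=
        mul_le_mul_of_nonneg_right h1 (Real.rpow_nonneg (by linarith [ht.1]) _)
  rw [key] at hle
  exact top_le_iff.mp hle

/-- Non-integrability of the squared derivative of the Molchan–Golosov kernel:
`∫₀^T ∫_s^T (t/s)^{2H−1}(t−s)^{2H−3} dt ds = ∞`.  By Hitsuda's criterion this entails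
that the law of the ccmfBm with `b ≠ 0` is singular to the law of any multiple of Bm. -/
theorem KH_derivative_not_square_integrable (H T : ℝ) (hH : H ∈ Set.Ioo (1/2 : ℝ) 1)
    (hT : 0 < T) :
    ∫⁻ s in Set.Ioo (0:ℝ) T, ∫⁻ t in Set.Ioo s T,
      ENNReal.ofReal ((t/s) ^ (2*H - 1) * (t - s) ^ (2*H - 3)) = ⊤ := by
  have h : ∀ s ∈ Set.Ioo (0:ℝ) T,
      (∫⁻ t in Set.Ioo s T,
        ENNReal.ofReal ((t/s) ^ (2*H - 1) * (t - s) ^ (2*H - 3))) = ⊤ :=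
    fun s hs => inner_eq_top H s T hH hs.1 hs.2
  calc ∫⁻ s in Set.Ioo (0:ℝ) T, ∫⁻ t in Set.Ioo s T,
        ENNReal.ofReal ((t/s) ^ (2*H - 1) * (t - s) ^ (2*H - 3))
      = ∫⁻ _ in Set.Ioo (0:ℝ) T, (⊤ : ENNReal) :=
        setLIntegral_congr_fun measurableSet_Ioo h
    _ = ⊤ := by
        rw [setLIntegral_const, Real.volume_Ioo,
          ENNReal.top_mul (ENNReal.ofReal_pos.mpr (by linarith)).ne']
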